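/- arXiv:1610.00858 — 2 statements merged into one kernel-verified Lean document; each statement's English description precedes it below -/
import Mathlib

section
/- Let U be a non-principal ultrafilter on ω and consider the ultraproduct ∏_U P_i of the posets P_0, P_1, P_2, .... Then for all m, n with 3 ≤ m, n ≤ ω, the ultraproduct ∏_U P_i is (m,n)-representable. -/
open Cardinal

universe u

/-- A field of sets: a collection of subsets of `X` closed under finite unions,
finite intersections, and complements. -/
def IsFieldOfSets {X : Type u} (F : Set (Set X)) : Prop :=
  ∅ ∈ F ∧ Set.univ ∈ F ∧ (∀ A ∈ F, ∀ B ∈ F, A ∪ B ∈ F) ∧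
    (∀ A ∈ F, ∀ B ∈ F, A ∩ B ∈ F) ∧ (∀ A ∈ F, Aᶜ ∈ F)

/-- A poset `P` is `(α,β)`-representable if there is a field of sets `F` and an
injective map `h : P → F` preserving all existing meets of sets of cardinality `< α`
and all existing joins of sets of cardinality `< β`. -/
def IsRepresentable (α β : Cardinal.{u}) (P : Type u) [PartialOrder P] : Prop :=
  ∃ (X : Type u) (F : Set (Set X)) (h : P → Set X),
    IsFieldOfSets F ∧ (∀ p : P, h p ∈ F) ∧ Function.Injective h ∧
    (∀ S : Set P, #S < α → ∀ a : P, IsGLB S a → h a = ⋂ s ∈ S, h s) ∧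
    (∀ T : Set P, #T < β → ∀ a : P, IsLUB T a → h a = ⋃ t ∈ T, h t)

/-- The setoid on `∀ i, P i` identifying functions that agree on a set belonging to `U`. -/
def upSetoid {ι : Type u} (U : Ultrafilter ι) (P : ι → Type u) : Setoid (∀ i, P i) where
  r x y := {i | x i = y i} ∈ U
  iseqv := by
    refine ⟨fun x => by
        rw [show {i | x i = x i} = Set.univ by simp]; exact Filter.univ_mem,
      fun {x y} h => ?_, fun {x y z} h1 h2 => ?_⟩
    · exact Filter.mem_of_superset h fun i hi => hi.symm
    · filter_upwards [h1, h2] with i hi1 hi2 using hi1.trans hi2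

/-- The ultraproduct of the family `P` of posets over the ultrafilter `U`. -/
def UProd {ι : Type u} (U : Ultrafilter ι) (P : ι → Type u) : Type u :=
  Quotient (upSetoid U P)

instance uprodPartialOrder {ι : Type u} (U : Ultrafilter ι) (P : ι → Type u)
    [∀ i, PartialOrder (P i)] : PartialOrder (UProd U P) where
  le := Quotient.lift₂ (fun x y => {i | x i ≤ y i} ∈ U) (by
    intro a₁ b₁ a₂ b₂ h₁ h₂
    apply propext
    constructor <;> intro h
    · filter_upwards [h, h₁, h₂] with i hle he1 he2
      rw [← he1, ← he2]; exact hle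
    · filter_upwards [h, h₁, h₂] with i hle he1 he2
      rw [he1, he2]; exact hle)
  le_refl := by
    rintro ⟨x⟩
    show {i | x i ≤ x i} ∈ U
    rw [show {i | x i ≤ x i} = Set.univ by simp]
    exact Filter.univ_mem
  le_trans := by
    rintro ⟨x⟩ ⟨y⟩ ⟨z⟩ h1 h2
    show {i | x i ≤ z i} ∈ U
    filter_upwards [(h1 : {i | x i ≤ y i} ∈ U), (h2 : {i | y i ≤ z i} ∈ U)] with i u1 u2
      using le_trans u1 u2
  le_antisymm := by
    rintro ⟨x⟩ ⟨y⟩ h1 h2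
    apply Quotient.sound
    show {i | x i = y i} ∈ U
    filter_upwards [(h1 : {i | x i ≤ y i} ∈ U), (h2 : {i | y i ≤ x i} ∈ U)] with i u1 u2
      using le_antisymm u1 u2

/-- The levels `N n`: `N 0` has four elements (`a`, `b`, `c`, `d`), and `N (n+1)` has one
element `e_{xy}` for each unordered pair of distinct elements `x`, `y` of `N n`. -/
def N : ℕ → Type
  | 0 => Fin 4
  | n + 1 => { s : Sym2 (N n) // ¬s.IsDiag }

/-- The element `e_{xy}` of `N (n+1)` corresponding to distinct `x y : N n`. -/
def mkE {n : ℕ} (x y : N n) (h : x ≠ y) : N (n + 1) :=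
  ⟨s(x, y), by simp [h]⟩

/-- The carrier of the poset `P_k`: the elements `p`, `q`, the elements of `N n` for
`n ≤ k` (constructor `node`), and two elements `x'` (constructor `prime`) and `x''`
(constructor `dprime`) for every element `x` of `N n` with `n ≤ k`. -/
inductive Elt (k : ℕ) : Type
  | p : Elt k
  | q : Elt k
  | node (n : ℕ) (hn : n ≤ k) (x : N n) : Elt k
  | prime (n : ℕ) (hn : n ≤ k) (x : N n) : Elt k
  | dprime (n : ℕ) (hn : n ≤ k) (x : N n) : Elt k

/-- The order on `P_k`: (1) `x < p` for `x ∈ N₀`; (2) `x < x'` and `x < x''` for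
`x ∈ N_n`, `n ≤ k`; (3) `e_{xy} < x', x'', y', y''` for `e_{xy} ∈ N_{n+1}`, `n + 1 ≤ k`;
(4) `q < x'` and `q < x''` for `x ∈ N_k`; (5) reflexivity; and nothing else. -/
inductive Le (k : ℕ) : Elt k → Elt k → Prop
  | refl (x : Elt k) : Le k x x
  | node_p (h0 : 0 ≤ k) (x : N 0) : Le k (.node 0 h0 x) .p
  | node_prime (n : ℕ) (hn : n ≤ k) (x : N n) : Le k (.node n hn x) (.prime n hn x)
  | node_dprime (n : ℕ) (hn : n ≤ k) (x : N n) : Le k (.node n hn x) (.dprime n hn x)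
  | e_prime (n : ℕ) (hn : n + 1 ≤ k) (e : N (n + 1)) (x : N n) (hx : x ∈ e.1) :
      Le k (.node (n + 1) hn e) (.prime n (Nat.le_of_succ_le hn) x)
  | e_dprime (n : ℕ) (hn : n + 1 ≤ k) (e : N (n + 1)) (x : N n) (hx : x ∈ e.1) :
      Le k (.node (n + 1) hn e) (.dprime n (Nat.le_of_succ_le hn) x)
  | q_prime (x : N k) : Le k .q (.prime k le_rfl x)
  | q_dprime (x : N k) : Le k .q (.dprime k le_rfl x)

lemma Le.eq_of_le_node {k n : ℕ} {x : Elt k} {hn : n ≤ k} {w : N n}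
    (h : Le k x (Elt.node n hn w)) : x = Elt.node n hn w := by
  cases h; rfl

lemma Le.eq_of_le_q {k : ℕ} {x : Elt k} (h : Le k x Elt.q) : x = Elt.q := by
  cases h; rfl

lemma Le.left_cases {k : ℕ} {x y : Elt k} (h : Le k x y) :
    x = y ∨ (∃ n hn w, x = Elt.node n hn w) ∨ x = Elt.q := by
  cases h with
  | refl => exact Or.inl rfl
  | node_p h0 w => exact Or.inr (Or.inl ⟨_, _, _, rfl⟩)
  | node_prime n hn w => exact Or.inr (Or.inl ⟨_, _, _, rfl⟩)
  | node_dprime n hn w => exact Or.inr (Or.inl ⟨_, _, _, rfl⟩)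
  | e_prime n hn e w hw => exact Or.inr (Or.inl ⟨_, _, _, rfl⟩)
  | e_dprime n hn e w hw => exact Or.inr (Or.inl ⟨_, _, _, rfl⟩)
  | q_prime w => exact Or.inr (Or.inr rfl)
  | q_dprime w => exact Or.inr (Or.inr rfl)

/-- `P_k` as a partial order, with order relation `Le k`. -/
instance EltPartialOrder (k : ℕ) : PartialOrder (Elt k) where
  le := Le k
  le_refl := Le.refl
  le_trans := by
    intro x y z h1 h2
    rcases h2.left_cases with rfl | ⟨n, hn, w, rfl⟩ | rfl
    · exact h1
    · rw [h1.eq_of_le_node]; exact h2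
    · rw [h1.eq_of_le_q]; exact h2
  le_antisymm := by
    intro x y h1 h2
    rcases h1.left_cases with rfl | ⟨n, hn, w, rfl⟩ | rfl
    · rfl
    · exact (h2.eq_of_le_node).symm
    · exact (h2.eq_of_le_q).symm

section Pointwise

variable {k : ℕ}

lemma Le.prime_le {n : ℕ} {hn : n ≤ k} {w : N n} {y : Elt k}
    (h : Le k (Elt.prime n hn w) y) : y = Elt.prime n hn w := by
  cases h; rfl

lemma Le.dprime_le {n : ℕ} {hn : n ≤ k} {w : N n} {y : Elt k}
    (h : Le k (Elt.dprime n hn w) y) : y = Elt.dprime n hn w := by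
  cases h; rfl

lemma Le.p_le {y : Elt k} (h : Le k Elt.p y) : y = Elt.p := by
  cases h; rfl

lemma Le.le_p {x : Elt k} (h : Le k x Elt.p) :
    x = Elt.p ∨ ∃ (h0 : 0 ≤ k) (w : N 0), x = Elt.node 0 h0 w := by
  cases h with
  | refl => exact Or.inl rfl
  | node_p h0 w => exact Or.inr ⟨h0, w, rfl⟩

lemma Le.q_le {y : Elt k} (h : Le k Elt.q y) :
    y = Elt.q ∨ (∃ w : N k, y = Elt.prime k le_rfl w) ∨ ∃ w : N k, y = Elt.dprime k le_rfl w := by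
  cases h with
  | refl => exact Or.inl rfl
  | q_prime w => exact Or.inr (Or.inl ⟨w, rfl⟩)
  | q_dprime w => exact Or.inr (Or.inr ⟨w, rfl⟩)

lemma Le.le_prime {n : ℕ} {hn : n ≤ k} {w : N n} {x : Elt k}
    (h : Le k x (Elt.prime n hn w)) :
    x = Elt.prime n hn w ∨ x = Elt.node n hn w ∨
      (∃ (hn1 : n + 1 ≤ k) (e : N (n + 1)), w ∈ e.1 ∧ x = Elt.node (n + 1) hn1 e) ∨
      (n = k ∧ x = Elt.q) := by
  cases h with
  | refl => exact Or.inl rfl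
  | node_prime n hn x => exact Or.inr (Or.inl rfl)
  | e_prime n hn e x hx => exact Or.inr (Or.inr (Or.inl ⟨hn, e, hx, rfl⟩))
  | q_prime x => exact Or.inr (Or.inr (Or.inr ⟨rfl, rfl⟩))

lemma Le.le_dprime {n : ℕ} {hn : n ≤ k} {w : N n} {x : Elt k}
    (h : Le k x (Elt.dprime n hn w)) :
    x = Elt.dprime n hn w ∨ x = Elt.node n hn w ∨
      (∃ (hn1 : n + 1 ≤ k) (e : N (n + 1)), w ∈ e.1 ∧ x = Elt.node (n + 1) hn1 e) ∨
      (n = k ∧ x = Elt.q) := by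
  cases h with
  | refl => exact Or.inl rfl
  | node_dprime n hn x => exact Or.inr (Or.inl rfl)
  | e_dprime n hn e x hx => exact Or.inr (Or.inr (Or.inl ⟨hn, e, hx, rfl⟩))
  | q_dprime x => exact Or.inr (Or.inr (Or.inr ⟨rfl, rfl⟩))

lemma Le.node_le {n : ℕ} {hn : n ≤ k} {w : N n} {y : Elt k}
    (h : Le k (Elt.node n hn w) y) :
    y = Elt.node n hn w ∨ y = Elt.prime n hn w ∨ y = Elt.dprime n hn w ∨
      (n = 0 ∧ y = Elt.p) ∨
      ∃ (m : ℕ) (hm : m ≤ k) (x : N m) (e : N (m + 1)),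
        n = m + 1 ∧ HEq w e ∧ x ∈ e.1 ∧
          (y = Elt.prime m hm x ∨ y = Elt.dprime m hm x) := by
  cases h with
  | refl => exact Or.inl rfl
  | node_p h0 x => exact Or.inr (Or.inr (Or.inr (Or.inl ⟨rfl, rfl⟩)))
  | node_prime n hn x => exact Or.inr (Or.inl rfl)
  | node_dprime n hn x => exact Or.inr (Or.inr (Or.inl rfl))
  | e_prime m hm e x hx =>
      exact Or.inr (Or.inr (Or.inr (Or.inr
        ⟨m, Nat.le_of_succ_le hm, x, e, rfl, HEq.rfl, hx, Or.inl rfl⟩)))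
  | e_dprime m hm e x hx =>
      exact Or.inr (Or.inr (Or.inr (Or.inr
        ⟨m, Nat.le_of_succ_le hm, x, e, rfl, HEq.rfl, hx, Or.inr rfl⟩)))

/-- The twin of an element: swaps primes and double primes. -/
def twin : Elt k → Elt k
  | .prime n hn w => .dprime n hn w
  | .dprime n hn w => .prime n hn w
  | x => x

lemma Le.le_twin {x y : Elt k} (h : Le k x y) (hne : x ≠ y) : Le k x (twin y) := by
  cases h with
  | refl => exact absurd rfl hne
  | node_p h0 x => exact Le.node_p h0 x
  | node_prime n hn x => exact Le.node_dprime n hn x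
  | node_dprime n hn x => exact Le.node_prime n hn x
  | e_prime n hn e x hx => exact Le.e_dprime n hn e x hx
  | e_dprime n hn e x hx => exact Le.e_prime n hn e x hx
  | q_prime x => exact Le.q_dprime x
  | q_dprime x => exact Le.q_prime x

lemma le_twin_self {x : Elt k} (h : Le k x (twin x)) :
    x = Elt.p ∨ x = Elt.q ∨ ∃ (n : ℕ) (hn : n ≤ k) (w : N n), x = Elt.node n hn w := by
  cases x with
  | p => exact Or.inl rfl
  | q => exact Or.inr (Or.inl rfl)
  | node n hn w => exact Or.inr (Or.inr ⟨n, hn, w, rfl⟩)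
  | prime n hn w => exact absurd h.prime_le (by simp [twin])
  | dprime n hn w => exact absurd h.dprime_le (by simp [twin])

end Pointwise
section Atoms

lemma sym2_exists_pair {α : Type*} (s : Sym2 α) : ∃ a b, s = s(a, b) := by
  induction s using Sym2.inductionOn with
  | hf a b => exact ⟨a, b, rfl⟩

/-- An (arbitrary) decomposition of `e : N (n+1)` into a pair of distinct elements. -/
noncomputable def compPair {n : ℕ} (e : N (n + 1)) : N n × N n :=
  Classical.choose (α := N n × N n)
    (p := fun pr => e.1 = s(pr.1, pr.2) ∧ pr.1 ≠ pr.2)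
    (by
      obtain ⟨a, b, hab⟩ := sym2_exists_pair e.1
      refine ⟨(a, b), hab, ?_⟩
      intro h
      simp only at h
      subst h
      exact e.2 (hab ▸ (by simp : Sym2.IsDiag s(a, a))))

lemma compPair_spec {n : ℕ} (e : N (n + 1)) :
    e.1 = s((compPair e).1, (compPair e).2) ∧ (compPair e).1 ≠ (compPair e).2 :=
  Classical.choose_spec (α := N n × N n)
    (p := fun pr => e.1 = s(pr.1, pr.2) ∧ pr.1 ≠ pr.2) _

/-- `cont g n w` : `g` is an iterated level-0 component ("atom") of `w : N n`. -/
def cont (g : Fin 4) : (n : ℕ) → N n → Prop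
  | 0, w => w = g
  | n + 1, e => ∃ z ∈ e.1, cont g n z

/-- An atom of `w` chosen to avoid `c` when possible. -/
noncomputable def atomAvoid (c : Fin 4) : (n : ℕ) → N n → Fin 4
  | 0, w => w
  | n + 1, e =>
      if atomAvoid c n (compPair e).1 ≠ c then atomAvoid c n (compPair e).1
      else atomAvoid c n (compPair e).2

lemma cont_atomAvoid (c : Fin 4) : ∀ (n : ℕ) (w : N n), cont (atomAvoid c n w) n w := by
  intro n
  induction n with
  | zero => intro w; rfl
  | succ n ih =>
      intro e
      obtain ⟨he, -⟩ := compPair_spec e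
      rw [show cont (atomAvoid c (n+1) e) (n+1) e = ∃ z ∈ e.1, cont (atomAvoid c (n+1) e) n z
        from rfl]
      rw [show atomAvoid c (n+1) e = if atomAvoid c n (compPair e).1 ≠ c
          then atomAvoid c n (compPair e).1 else atomAvoid c n (compPair e).2 from rfl]
      split
      · exact ⟨(compPair e).1, by rw [he]; exact Sym2.mem_mk_left _ _, ih _⟩
      · exact ⟨(compPair e).2, by rw [he]; exact Sym2.mem_mk_right _ _, ih _⟩

lemma atomAvoid_ne (c : Fin 4) : ∀ (n : ℕ) (w : N (n + 1)), atomAvoid c (n + 1) w ≠ c := by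
  intro n
  induction n with
  | zero =>
      intro e
      obtain ⟨-, hne⟩ := compPair_spec e
      rw [show atomAvoid c 1 e = if atomAvoid c 0 (compPair e).1 ≠ c
          then atomAvoid c 0 (compPair e).1 else atomAvoid c 0 (compPair e).2 from rfl]
      split
      case isTrue h => exact h
      case isFalse h =>
        push_neg at h
        rw [show ∀ w : N 0, atomAvoid c 0 w = w from fun _ => rfl] at h ⊢
        rw [← h]; exact fun hc => hne hc.symm
  | succ n ih =>
      intro e
      rw [show atomAvoid c (n+2) e = if atomAvoid c (n+1) (compPair e).1 ≠ c
          then atomAvoid c (n+1) (compPair e).1 else atomAvoid c (n+1) (compPair e).2 from rfl]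
      rw [if_pos (ih _)]
      exact ih _

lemma cont_succ_iff (g : Fin 4) {n : ℕ} (e : N (n + 1)) :
    cont g (n + 1) e ↔ cont g n (compPair e).1 ∨ cont g n (compPair e).2 := by
  obtain ⟨he, -⟩ := compPair_spec e
  constructor
  · rintro ⟨z, hz, hc⟩
    rw [he, Sym2.mem_iff] at hz
    rcases hz with rfl | rfl
    · exact Or.inl hc
    · exact Or.inr hc
  · rintro (h | h)
    · exact ⟨_, by rw [he]; exact Sym2.mem_mk_left _ _, h⟩
    · exact ⟨_, by rw [he]; exact Sym2.mem_mk_right _ _, h⟩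

end Atoms
section UProdBasics

variable {U : Ultrafilter ℕ}

/-- Representative-based constructor for the ultraproduct. -/
def umk (U : Ultrafilter ℕ) (x : ∀ i, Elt i) : UProd U Elt :=
  Quotient.mk (upSetoid U Elt) x

lemma umk_le_umk {x y : ∀ i, Elt i} : umk U x ≤ umk U y ↔ {i | x i ≤ y i} ∈ U :=
  Iff.rfl

lemma umk_eq_umk {x y : ∀ i, Elt i} : umk U x = umk U y ↔ {i | x i = y i} ∈ U :=
  ⟨fun h => Quotient.exact h, fun h => Quotient.sound h⟩

lemma umk_surj (a : UProd U Elt) : ∃ x, umk U x = a := Quotient.exists_rep a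

lemma umk_ne_umk {x y : ∀ i, Elt i} (h : umk U x ≠ umk U y) : {i | x i ≠ y i} ∈ U := by
  have hnot : {i | x i = y i} ∉ U := fun hmem => h (umk_eq_umk.2 hmem)
  have := (Ultrafilter.compl_mem_iff_notMem (s := {i | x i = y i})).2 hnot
  simpa [Set.compl_setOf] using this

lemma not_mem_of_umk_ne {x y : ∀ i, Elt i} (h : {i | x i = y i} ∉ U) :
    {i | x i ≠ y i} ∈ U := by
  have := (Ultrafilter.compl_mem_iff_notMem (s := {i | x i = y i})).2 h
  simpa [Set.compl_setOf] using this

lemma uset_nonempty {s : Set ℕ} (h : s ∈ U) : s.Nonempty :=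
  Filter.nonempty_of_mem h

lemma singleton_not_mem (hU : ∀ i : ℕ, U ≠ pure i) (n : ℕ) : {n} ∉ (U : Ultrafilter ℕ) := by
  intro h
  apply hU n
  apply Ultrafilter.coe_injective
  apply Filter.ext
  intro s
  simp only [Ultrafilter.mem_coe, Ultrafilter.coe_pure, Filter.mem_pure]
  constructor
  · intro hs
    obtain ⟨x, hx1, hx2⟩ := uset_nonempty (U.inter_mem hs h)
    simp only [Set.mem_singleton_iff] at hx2
    exact hx2 ▸ hx1
  · intro hs
    exact Filter.mem_of_superset h (by simpa using hs)

lemma union3_mem {s t r : Set ℕ} (h : s ∪ (t ∪ r) ∈ U) : s ∈ U ∨ t ∈ U ∨ r ∈ U := by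
  rcases (Ultrafilter.union_mem_iff.1 h) with h' | h'
  · exact Or.inl h'
  · rcases (Ultrafilter.union_mem_iff.1 h') with h'' | h''
    · exact Or.inr (Or.inl h'')
    · exact Or.inr (Or.inr h'')

/-- The class of the constant function `p`. -/
def pbar (U : Ultrafilter ℕ) : UProd U Elt := umk U fun _ => Elt.p

/-- The class of a level-0 node function. -/
def nd0 (U : Ultrafilter ℕ) (f : ℕ → Fin 4) : UProd U Elt :=
  umk U fun i => Elt.node 0 (Nat.zero_le i) (f i)

lemma le_pbar_iff {x : ∀ i, Elt i} :
    umk U x ≤ pbar U ↔ {i | x i = Elt.p ∨ ∃ w, x i = Elt.node 0 (Nat.zero_le i) w} ∈ U := by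
  constructor
  · intro h
    refine Filter.mem_of_superset (umk_le_umk.1 h) ?_
    intro i hi
    rcases Le.le_p hi with h' | ⟨h0, w, h'⟩
    · exact Or.inl h'
    · exact Or.inr ⟨w, h'⟩
  · intro h
    apply umk_le_umk.2
    refine Filter.mem_of_superset h ?_
    rintro i (hi | ⟨w, hi⟩)
    · show x i ≤ Elt.p
      rw [hi]
    · show x i ≤ Elt.p
      rw [hi]; exact Le.node_p _ _

/-- No top element: `IsGLB ∅` is impossible. -/
lemma no_isGLB_empty (t0 : UProd U Elt) : ¬ IsGLB (∅ : Set (UProd U Elt)) t0 := by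
  intro h
  obtain ⟨z, rfl⟩ := umk_surj t0
  have h1 : umk U (fun i => Elt.prime 0 (Nat.zero_le i) (0 : Fin 4)) ≤ umk U z :=
    h.2 (fun s hs => absurd hs (Set.notMem_empty s))
  have h2 : umk U (fun i => Elt.dprime 0 (Nat.zero_le i) (0 : Fin 4)) ≤ umk U z :=
    h.2 (fun s hs => absurd hs (Set.notMem_empty s))
  obtain ⟨i, hi1, hi2⟩ := uset_nonempty (U.inter_mem (umk_le_umk.1 h1) (umk_le_umk.1 h2))
  have e1 := Le.prime_le hi1
  have e2 := Le.dprime_le hi2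
  rw [e1] at e2
  cases e2

end UProdBasics
section Join

variable {U : Ultrafilter ℕ}

/-- Every member of `T` strictly below `c` lies below `c`'s twin. -/
lemma mem_le_twin {T : Set (UProd U Elt)} {z : ∀ i, Elt i}
    (hub : umk U z ∈ upperBounds T) (hc : umk U z ∉ T) {t : UProd U Elt} (ht : t ∈ T) :
    t ≤ umk U (fun i => twin (z i)) := by
  obtain ⟨x, rfl⟩ := umk_surj t
  have h1 : {i | x i ≤ z i} ∈ U := umk_le_umk.1 (hub ht)
  have h2 : {i | x i ≠ z i} ∈ U := umk_ne_umk (fun h => hc (h ▸ ht))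
  apply umk_le_umk.2
  filter_upwards [h1, h2] with i hi1 hi2
  exact Le.le_twin hi1 hi2

/-- Classification of nontrivial joins: the only possibility is `pbar`, as the join
of at least two distinct level-0 node classes. -/
lemma join_classify {T : Set (UProd U Elt)} {c : UProd U Elt}
    (hlub : IsLUB T c) (hc : c ∉ T) :
    c = pbar U ∧ ∃ f1 f2 : ℕ → Fin 4,
      nd0 U f1 ∈ T ∧ nd0 U f2 ∈ T ∧ nd0 U f1 ≠ nd0 U f2 := by
  obtain ⟨z, rfl⟩ := umk_surj c
  -- the twin is an upper bound, hence `z i ≤ twin (z i)` a.e.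
  have htwin : umk U z ≤ umk U (fun i => twin (z i)) :=
    hlub.2 (fun t ht => mem_le_twin hlub.1 hc ht)
  have hW : {i | z i = Elt.p} ∪ ({i | z i = Elt.q} ∪
      {i | ∃ n hn w, z i = Elt.node n hn w}) ∈ U := by
    refine Filter.mem_of_superset (umk_le_umk.1 htwin) ?_
    intro i hi
    rcases le_twin_self hi with h | h | h
    · exact Or.inl h
    · exact Or.inr (Or.inl h)
    · exact Or.inr (Or.inr h)
  -- if `T` were empty, `c` would be a bottom element; impossible
  have hTne : T.Nonempty := by
    by_contra hT
    rw [Set.not_nonempty_iff_eq_empty] at hT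
    subst hT
    have hb : umk U z ≤ umk U (fun i => Elt.q) :=
      hlub.2 (fun t ht => absurd ht (Set.notMem_empty t))
    have hb' : umk U z ≤ umk U (fun i => Elt.node 0 (Nat.zero_le i) (0 : Fin 4)) :=
      hlub.2 (fun t ht => absurd ht (Set.notMem_empty t))
    obtain ⟨i, hi1, hi2⟩ := uset_nonempty (U.inter_mem (umk_le_umk.1 hb) (umk_le_umk.1 hb'))
    have e1 := Le.eq_of_le_q hi1
    have e2 := Le.eq_of_le_node hi2
    rw [e1] at e2
    cases e2
  rcases union3_mem hW with hp | hq | hnode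
  · -- the main case : `c = pbar`
    have hcp : umk U z = pbar U := umk_eq_umk.2 hp
    -- every element of `T` is a level-0 node class
    have hnd : ∀ t ∈ T, ∃ f : ℕ → Fin 4, t = nd0 U f := by
      intro t ht
      obtain ⟨x, rfl⟩ := umk_surj t
      have h1 : {i | x i ≤ z i} ∈ U := umk_le_umk.1 (hlub.1 ht)
      have h2 : {i | x i ≠ z i} ∈ U := umk_ne_umk (fun h => hc (h ▸ ht))
      have h3 : {i | ∃ w, x i = Elt.node 0 (Nat.zero_le i) w} ∈ U := by
        filter_upwards [h1, h2, hp] with i hi1 hi2 hip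
        rw [hip] at hi1 hi2
        rcases Le.le_p hi1 with h | ⟨h0, w, h⟩
        · exact absurd h hi2
        · exact ⟨w, h⟩
      classical
      refine ⟨fun i => if h : ∃ w, x i = Elt.node 0 (Nat.zero_le i) w
        then Classical.choose h else 0, ?_⟩
      apply umk_eq_umk.2
      filter_upwards [h3] with i hi
      rw [dif_pos hi]
      exact Classical.choose_spec hi
    obtain ⟨t1, ht1⟩ := hTne
    by_cases hone : ∀ t ∈ T, t = t1
    · exfalso
      have h1 : umk U z ≤ t1 := hlub.2 (fun s hs => (hone s hs) ▸ le_refl t1)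
      have h2 : t1 ≤ umk U z := hlub.1 ht1
      exact hc ((le_antisymm h1 h2).symm ▸ ht1)
    · push_neg at hone
      obtain ⟨t2, ht2, hne⟩ := hone
      obtain ⟨f1, rfl⟩ := hnd t1 ht1
      obtain ⟨f2, rfl⟩ := hnd t2 ht2
      exact ⟨hcp, f2, f1, ht2, ht1, hne⟩
  · -- `c` a.e. equal to `q`: `T` must be empty, contradiction
    exfalso
    obtain ⟨t1, ht1⟩ := hTne
    obtain ⟨x, rfl⟩ := umk_surj t1
    have h1 : {i | x i ≤ z i} ∈ U := umk_le_umk.1 (hlub.1 ht1)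
    have h2 : {i | x i ≠ z i} ∈ U := umk_ne_umk (fun h => hc (h ▸ ht1))
    obtain ⟨i, ⟨hi1, hi2⟩, hi3⟩ := uset_nonempty (U.inter_mem (U.inter_mem h1 h2) hq)
    simp only [Set.mem_setOf_eq] at hi1 hi2 hi3
    rw [hi3] at hi1 hi2
    exact hi2 (Le.eq_of_le_q hi1)
  · -- `c` a.e. a node: same
    exfalso
    obtain ⟨t1, ht1⟩ := hTne
    obtain ⟨x, rfl⟩ := umk_surj t1
    have h1 : {i | x i ≤ z i} ∈ U := umk_le_umk.1 (hlub.1 ht1)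
    have h2 : {i | x i ≠ z i} ∈ U := umk_ne_umk (fun h => hc (h ▸ ht1))
    obtain ⟨i, ⟨hi1, hi2⟩, hi3⟩ := uset_nonempty (U.inter_mem (U.inter_mem h1 h2) hnode)
    simp only [Set.mem_setOf_eq] at hi1 hi2 hi3
    obtain ⟨n, hn, w, hi3⟩ := hi3
    rw [hi3] at hi1 hi2
    exact hi2 (Le.eq_of_le_node hi1)

end Join
section Fg

variable {U : Ultrafilter ℕ}

lemma N_three : ∀ n : ℕ, ∃ x y z : N n, x ≠ y ∧ x ≠ z ∧ y ≠ z := by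
  intro n
  induction n with
  | zero =>
      refine ⟨(⟨0, by omega⟩ : Fin 4), (⟨1, by omega⟩ : Fin 4), (⟨2, by omega⟩ : Fin 4),
        ?_, ?_, ?_⟩ <;> · intro h; exact absurd (congrArg Fin.val h) (by simp)
  | succ n ih =>
      obtain ⟨x, y, z, hxy, hxz, hyz⟩ := ih
      refine ⟨mkE x y hxy, mkE x z hxz, mkE y z hyz, ?_, ?_, ?_⟩ <;>
        · intro h
          have := congrArg Subtype.val h
          simp only [mkE, Sym2.eq_iff] at this
          tauto

instance N_nonempty (n : ℕ) : Nonempty (N n) := by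
  obtain ⟨x, -, -, -⟩ := N_three n
  exact ⟨x⟩

/-- Choice extraction along the ultrafilter. -/
lemma U_extract {α : Type} [Nonempty α] {P : ℕ → α → Prop}
    (h : {i | ∃ a, P i a} ∈ U) : ∃ v : ℕ → α, {i | P i (v i)} ∈ U := by
  classical
  refine ⟨fun i => if h' : ∃ a, P i a then Classical.choose h' else Classical.arbitrary α, ?_⟩
  refine Filter.mem_of_superset h fun i hi => ?_
  have hi' : ∃ a, P i a := hi
  show P i (if h' : ∃ a, P i a then Classical.choose h' else Classical.arbitrary α)
  rw [dif_pos hi']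
  exact Classical.choose_spec hi'

lemma union4_mem {s t r w : Set ℕ} (h : s ∪ (t ∪ (r ∪ w)) ∈ U) :
    s ∈ U ∨ t ∈ U ∨ r ∈ U ∨ w ∈ U := by
  rcases Ultrafilter.union_mem_iff.1 h with h' | h'
  · exact Or.inl h'
  rcases Ultrafilter.union_mem_iff.1 h' with h'' | h''
  · exact Or.inr (Or.inl h'')
  rcases Ultrafilter.union_mem_iff.1 h'' with h3 | h3
  · exact Or.inr (Or.inr (Or.inl h3))
  · exact Or.inr (Or.inr (Or.inr h3))

/-- The set of indices where `z` is a node of level `n` with value avoiding atom `g`. -/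
def NN (g : ℕ → Fin 4) (n : ℕ) (z : ∀ i, Elt i) : Set ℕ :=
  {i | ∃ (hn : n ≤ i) (w : N n), ¬ cont (g i) n w ∧ z i = Elt.node n hn w}

/-- The set of indices where `z` is a prime or double prime of level `n` avoiding `g`. -/
def PD (g : ℕ → Fin 4) (n : ℕ) (z : ∀ i, Elt i) : Set ℕ :=
  {i | ∃ (hn : n ≤ i) (w : N n), ¬ cont (g i) n w ∧
    (z i = Elt.prime n hn w ∨ z i = Elt.dprime n hn w)}

/-- The filter-like subset of the ultraproduct associated with the atom function `g`. -/
def Fg (U : Ultrafilter ℕ) (g : ℕ → Fin 4) : Set (UProd U Elt) :=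
  {c | c = pbar U ∨ ∃ (z : ∀ i, Elt i) (n : ℕ), umk U z = c ∧ (NN g n z ∈ U ∨ PD g n z ∈ U)}

lemma pbar_mem_Fg (g : ℕ → Fin 4) : pbar U ∈ Fg U g := Or.inl rfl

lemma NN_mem_Fg {g : ℕ → Fin 4} {n : ℕ} {z : ∀ i, Elt i} (h : NN g n z ∈ U) :
    umk U z ∈ Fg U g := Or.inr ⟨z, n, rfl, Or.inl h⟩

lemma PD_mem_Fg {g : ℕ → Fin 4} {n : ℕ} {z : ∀ i, Elt i} (h : PD g n z ∈ U) :
    umk U z ∈ Fg U g := Or.inr ⟨z, n, rfl, Or.inr h⟩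

/-- Membership in `Fg` transferred to any chosen representative. -/
lemma Fg_elim {g : ℕ → Fin 4} {c : UProd U Elt} (h : c ∈ Fg U g)
    {y : ∀ i, Elt i} (hy : umk U y = c) :
    {i | y i = Elt.p} ∈ U ∨ ∃ n, NN g n y ∈ U ∨ PD g n y ∈ U := by
  rcases h with h | ⟨z, n, hz, h⟩
  · left
    exact umk_eq_umk.1 (hy.trans h)
  · right
    refine ⟨n, ?_⟩
    have hzy : {i | z i = y i} ∈ U := umk_eq_umk.1 (hz.trans hy.symm)
    rcases h with h | h
    · left
      filter_upwards [h, hzy] with i hi he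
      obtain ⟨hn, w, hw, hzi⟩ := hi
      exact ⟨hn, w, hw, he ▸ hzi⟩
    · right
      filter_upwards [h, hzy] with i hi he
      obtain ⟨hn, w, hw, hzi⟩ := hi
      exact ⟨hn, w, hw, he ▸ hzi⟩

lemma Fg_upclosed {g : ℕ → Fin 4} {c d : UProd U Elt} (hc : c ∈ Fg U g) (hcd : c ≤ d) :
    d ∈ Fg U g := by
  obtain ⟨yd, rfl⟩ := umk_surj d
  rcases hc with hc | ⟨z, n, rfl, h⟩
  · subst hc
    left
    have hle : {i | Elt.p ≤ yd i} ∈ U := umk_le_umk.1 hcd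
    refine (umk_eq_umk.2 ?_).symm
    filter_upwards [hle] with i hi
    exact (Le.p_le hi).symm
  · have hle : {i | z i ≤ yd i} ∈ U := umk_le_umk.1 hcd
    rcases h with h | h
    · -- `c` is a class of nodes of level `n`
      rcases n with _ | m
      · have hsplit : {i | yd i = z i} ∪ ({i | yd i = Elt.p} ∪ PD g 0 yd) ∈ U := by
          filter_upwards [h, hle] with i hi hli
          obtain ⟨hn, w, hw, hzi⟩ := hi
          rw [hzi] at hli
          rcases Le.node_le hli with h' | h' | h' | ⟨-, h'⟩ | ⟨m, hm, x, e, hnm, -, -, -⟩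
          · exact Or.inl (show yd i = z i by rw [h', hzi])
          · exact Or.inr (Or.inr ⟨hn, w, hw, Or.inl h'⟩)
          · exact Or.inr (Or.inr ⟨hn, w, hw, Or.inr h'⟩)
          · exact Or.inr (Or.inl h')
          · exact absurd hnm (by omega)
        rcases union3_mem hsplit with hA | hB | hC
        · rw [umk_eq_umk.2 hA]; exact NN_mem_Fg h
        · exact Or.inl (umk_eq_umk.2 hB)
        · exact PD_mem_Fg hC
      · have hsplit : {i | yd i = z i} ∪ (PD g (m + 1) yd ∪
            (PD g m yd ∪ {i | yd i = Elt.p})) ∈ U := by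
          filter_upwards [h, hle] with i hi hli
          obtain ⟨hn, w, hw, hzi⟩ := hi
          rw [hzi] at hli
          rcases Le.node_le hli with h' | h' | h' | ⟨hn0, h'⟩ |
            ⟨m', hm', x, e, hnm, hwe, hxe, h'⟩
          · exact Or.inl (show yd i = z i by rw [h', hzi])
          · exact Or.inr (Or.inl ⟨hn, w, hw, Or.inl h'⟩)
          · exact Or.inr (Or.inl ⟨hn, w, hw, Or.inr h'⟩)
          · exact absurd hn0 (by omega)
          · have hmm : m' = m := by omega
            subst hmm
            have he : w = e := eq_of_heq hwe
            subst he
            refine Or.inr (Or.inr (Or.inl ⟨hm', x, fun hcx => hw ⟨x, hxe, hcx⟩, h'⟩))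
        rcases union4_mem hsplit with hA | hB | hC | hD
        · rw [umk_eq_umk.2 hA]; exact NN_mem_Fg h
        · exact PD_mem_Fg hB
        · exact PD_mem_Fg hC
        · exact Or.inl (umk_eq_umk.2 hD)
    · -- `c` is a class of primes/dprimes: then `d = c`
      have : {i | yd i = z i} ∈ U := by
        filter_upwards [h, hle] with i hi hli
        obtain ⟨hn, w, hw, hzi⟩ := hi
        rcases hzi with hzi | hzi
        · rw [hzi] at hli; exact (Le.prime_le hli) ▸ hzi.symm ▸ rfl
        · rw [hzi] at hli; exact (Le.dprime_le hli) ▸ hzi.symm ▸ rfl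
      have hde : umk U yd = umk U z := umk_eq_umk.2 this
      rw [hde]
      exact PD_mem_Fg h

end Fg
section Meet

variable {U : Ultrafilter ℕ}

lemma cont_pair {n : ℕ} {e : N (n + 1)} {a b : N n} (he : e.1 = s(a, b))
    (g : Fin 4) : cont g (n + 1) e ↔ cont g n a ∨ cont g n b := by
  constructor
  · rintro ⟨x, hx, hc⟩
    rw [he, Sym2.mem_iff] at hx
    rcases hx with rfl | rfl
    · exact Or.inl hc
    · exact Or.inr hc
  · rintro (hc | hc)
    · exact ⟨a, by rw [he]; exact Sym2.mem_mk_left _ _, hc⟩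
    · exact ⟨b, by rw [he]; exact Sym2.mem_mk_right _ _, hc⟩

lemma otherComp {n : ℕ} (e : N (n + 1)) {v : N n} (hv : v ∈ e.1) :
    ∃ u, e.1 = s(v, u) ∧ v ≠ u := by
  obtain ⟨he, hne⟩ := compPair_spec e
  rw [he, Sym2.mem_iff] at hv
  rcases hv with rfl | rfl
  · exact ⟨(compPair e).2, he, hne⟩
  · exact ⟨(compPair e).1, by rw [he, Sym2.eq_swap], fun hh => hne hh.symm⟩

lemma Fg_meet (hU : ∀ i : ℕ, U ≠ pure i) (g : ℕ → Fin 4) {S : Set (UProd U Elt)}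
    {t0 : UProd U Elt} (hS : S ⊆ Fg U g) (h : IsGLB S t0) : t0 ∈ Fg U g := by
  classical
  by_cases ht0 : t0 ∈ S
  · exact hS ht0
  rcases S.eq_empty_or_nonempty with rfl | ⟨s0, hs0⟩
  · exact absurd h (no_isGLB_empty t0)
  obtain ⟨z, rfl⟩ := umk_surj t0
  have hlow : ∀ s ∈ S, ∀ x, umk U x = s → {i | z i ≤ x i} ∈ U ∧ {i | z i ≠ x i} ∈ U := by
    intro s hs x hx
    refine ⟨umk_le_umk.1 (hx ▸ h.1 hs), umk_ne_umk fun he => ht0 (by rw [he, hx]; exact hs)⟩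
  obtain ⟨y0, hy0⟩ := umk_surj s0
  rcases Fg_elim (hS hs0) hy0 with hp | ⟨n, hnod | hpd⟩
  · -- `s0 = pbar` : `t0` is a class of level-0 nodes
    have hzle := (hlow s0 hs0 y0 hy0).1
    have hzne := (hlow s0 hs0 y0 hy0).2
    have hW : {i | ∃ w : N 0, z i = Elt.node 0 (Nat.zero_le i) w} ∈ U := by
      filter_upwards [hzle, hzne, hp] with i h1 h2 h3
      have h1' : z i ≤ y0 i := h1
      have h2' : z i ≠ y0 i := h2
      have h3' : y0 i = Elt.p := h3
      rw [h3'] at h1' h2'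
      rcases Le.le_p h1' with h' | ⟨h0, w, h'⟩
      · exact absurd h' h2'
      · exact ⟨w, h'⟩
    obtain ⟨w, hw⟩ := U_extract (α := N 0) hW
    by_cases hall : ∀ s ∈ S, s = pbar U
    · exfalso
      have hps : pbar U ∈ S := (hall s0 hs0) ▸ hs0
      have h1 : pbar U ≤ umk U z := h.2 fun s hs => le_of_eq (hall s hs).symm
      have h2 : umk U z ≤ pbar U := h.1 hps
      exact ht0 (by rw [le_antisymm h2 h1]; exact hps)
    · push_neg at hall
      obtain ⟨s1, hs1, hs1ne⟩ := hall
      obtain ⟨y1, hy1⟩ := umk_surj s1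
      have h1le := (hlow s1 hs1 y1 hy1).1
      have h1ne := (hlow s1 hs1 y1 hy1).2
      have hsplit : {i | y1 i = Elt.p} ∪ {i | ∃ hn : (0:ℕ) ≤ i,
          y1 i = Elt.prime 0 hn (w i) ∨ y1 i = Elt.dprime 0 hn (w i)} ∈ U := by
        filter_upwards [h1le, h1ne, hw] with i h1 h2 h3
        have h1' : z i ≤ y1 i := h1
        have h2' : z i ≠ y1 i := h2
        have h3' : z i = Elt.node 0 (Nat.zero_le i) (w i) := h3
        rw [h3'] at h1' h2'
        rcases Le.node_le h1' with h' | h' | h' | ⟨-, h'⟩ | ⟨m, hm, x, e, hnm, -, -, -⟩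
        · exact absurd h'.symm h2'
        · exact Or.inr ⟨Nat.zero_le i, Or.inl h'⟩
        · exact Or.inr ⟨Nat.zero_le i, Or.inr h'⟩
        · exact Or.inl h'
        · exact absurd hnm (by omega)
      rcases Ultrafilter.union_mem_iff.1 hsplit with hB | hC
      · exact absurd (hy1 ▸ umk_eq_umk.2 hB : s1 = pbar U) hs1ne
      · rcases Fg_elim (hS hs1) hy1 with hp1 | ⟨m, hnod1 | hpd1⟩
        · exfalso
          obtain ⟨i, hi1, hi2⟩ := uset_nonempty (U.inter_mem hp1 hC)
          have hi1' : y1 i = Elt.p := hi1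
          obtain ⟨hna, hi2'⟩ := hi2
          rcases hi2' with h' | h' <;> rw [hi1'] at h' <;> cases h'
        · exfalso
          obtain ⟨i, hi1, hi2⟩ := uset_nonempty (U.inter_mem hnod1 hC)
          obtain ⟨hm, u, -, hy⟩ := hi1
          obtain ⟨hna, hi2'⟩ := hi2
          rcases hi2' with h' | h' <;> rw [hy] at h' <;> cases h'
        · -- `s1` is a class of level-`m` primes; conclude `m = 0` and values match `w`
          have hm0 : m = 0 := by
            obtain ⟨i, hi1, hi2⟩ := uset_nonempty (U.inter_mem hpd1 hC)
            obtain ⟨hm, u, -, hy⟩ := hi1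
            obtain ⟨hna, hi2'⟩ := hi2
            rcases hy with hy | hy <;> rcases hi2' with h' | h' <;> rw [hy] at h' 
            · injection h'
            · cases h'
            · cases h'
            · injection h'
          subst hm0
          refine NN_mem_Fg (n := 0) ?_
          filter_upwards [hpd1, hC, hw] with i h1 h2 h3
          obtain ⟨hm, u, hu, hy⟩ := h1
          obtain ⟨hna, h2'⟩ := h2
          have hvw : u = w i := by
            rcases hy with hy | hy <;> rcases h2' with h' | h' <;> rw [hy] at h' 
            · injection h'
            · cases h'
            · cases h'
            · injection h'
          exact ⟨Nat.zero_le i, w i, hvw ▸ hu, h3⟩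
  · -- `s0` a class of nodes : impossible
    exfalso
    have hzle := (hlow s0 hs0 y0 hy0).1
    have hzne := (hlow s0 hs0 y0 hy0).2
    obtain ⟨i, ⟨h1, h2⟩, h3⟩ := uset_nonempty (U.inter_mem (U.inter_mem hzle hzne) hnod)
    have h1' : z i ≤ y0 i := h1
    have h2' : z i ≠ y0 i := h2
    obtain ⟨hn, u, -, hy⟩ := h3
    rw [hy] at h1' h2'
    exact h2' (Le.eq_of_le_node h1')
  · -- `s0` a class of primes/dprimes of level `n`
    obtain ⟨v, hv⟩ := U_extract (α := N n) (P := fun i v => ∃ hn : n ≤ i,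
        ¬ cont (g i) n v ∧ (y0 i = Elt.prime n hn v ∨ y0 i = Elt.dprime n hn v))
      (by
        refine Filter.mem_of_superset hpd fun i hi => ?_
        obtain ⟨hn, u, hu, hy⟩ := hi
        exact ⟨u, hn, hu, hy⟩)
    have hzle := (hlow s0 hs0 y0 hy0).1
    have hzne := (hlow s0 hs0 y0 hy0).2
    have hsplit : NN g n z ∪ ({i | ∃ (hn1 : n + 1 ≤ i) (e : N (n + 1)),
        v i ∈ e.1 ∧ z i = Elt.node (n + 1) hn1 e} ∪ {i | i = n}) ∈ U := by
      filter_upwards [hzle, hzne, hv] with i h1 h2 h3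
      have h1' : z i ≤ y0 i := h1
      have h2' : z i ≠ y0 i := h2
      obtain ⟨hn, hcont, hy⟩ := h3
      rcases hy with hy | hy
      · rw [hy] at h1' h2'
        rcases Le.le_prime h1' with h' | h' | ⟨hn1, e, he, h'⟩ | ⟨hnk, h'⟩
        · exact absurd h' h2'
        · exact Or.inl ⟨hn, v i, hcont, h'⟩
        · exact Or.inr (Or.inl ⟨hn1, e, he, h'⟩)
        · exact Or.inr (Or.inr hnk.symm)
      · rw [hy] at h1' h2'
        rcases Le.le_dprime h1' with h' | h' | ⟨hn1, e, he, h'⟩ | ⟨hnk, h'⟩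
        · exact absurd h' h2'
        · exact Or.inl ⟨hn, v i, hcont, h'⟩
        · exact Or.inr (Or.inl ⟨hn1, e, he, h'⟩)
        · exact Or.inr (Or.inr hnk.symm)
    rcases union3_mem hsplit with hA | hB | hC
    · exact NN_mem_Fg hA
    · -- `t0` a class of level-`(n+1)` nodes containing `v`
      obtain ⟨e, he⟩ := U_extract (α := N (n + 1)) (P := fun i e => ∃ hn1 : n + 1 ≤ i,
          v i ∈ e.1 ∧ z i = Elt.node (n + 1) hn1 e)
        (by
          refine Filter.mem_of_superset hB fun i hi => ?_
          obtain ⟨hn1, e, hve, hz⟩ := hi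
          exact ⟨e, hn1, hve, hz⟩)
      obtain ⟨y, hy⟩ := U_extract (α := N n) (P := fun i u =>
          ((e i).1 = s(v i, u) ∧ v i ≠ u) ∧
          ∃ hn1 : n + 1 ≤ i, z i = Elt.node (n + 1) hn1 (e i))
        (by
          refine Filter.mem_of_superset he fun i hi => ?_
          obtain ⟨hn1, hmem, hz⟩ := hi
          obtain ⟨u, hu1, hu2⟩ := otherComp _ hmem
          exact ⟨u, ⟨hu1, hu2⟩, hn1, hz⟩)
      have hclass : ∀ s ∈ S,
          (∃ xs, umk U xs = s ∧ {i | ∃ hn1 : n + 1 ≤ i,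
            xs i = Elt.prime (n+1) hn1 (e i) ∨ xs i = Elt.dprime (n+1) hn1 (e i)} ∈ U) ∨
          (∃ xs, umk U xs = s ∧ {i | ∃ hn : n ≤ i,
            xs i = Elt.prime n hn (v i) ∨ xs i = Elt.dprime n hn (v i)} ∈ U) ∨
          (∃ xs, umk U xs = s ∧ {i | ∃ hn : n ≤ i,
            xs i = Elt.prime n hn (y i) ∨ xs i = Elt.dprime n hn (y i)} ∈ U) := by
        intro s hs
        obtain ⟨xs, hxs⟩ := umk_surj s
        have h1 := (hlow s hs xs hxs).1
        have h2 := (hlow s hs xs hxs).2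
        have hsp : {i | ∃ hn1 : n + 1 ≤ i,
            xs i = Elt.prime (n+1) hn1 (e i) ∨ xs i = Elt.dprime (n+1) hn1 (e i)} ∪
            ({i | ∃ hn : n ≤ i,
              xs i = Elt.prime n hn (v i) ∨ xs i = Elt.dprime n hn (v i)} ∪
            {i | ∃ hn : n ≤ i,
              xs i = Elt.prime n hn (y i) ∨ xs i = Elt.dprime n hn (y i)}) ∈ U := by
          filter_upwards [h1, h2, hy] with i hi1 hi2 hi3
          have hi1' : z i ≤ xs i := hi1
          have hi2' : z i ≠ xs i := hi2
          obtain ⟨⟨hpair, hvy⟩, hn1, hz⟩ := hi3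
          rw [hz] at hi1' hi2'
          rcases Le.node_le hi1' with h' | h' | h' | ⟨h0, -⟩ |
            ⟨m, hm, x, e', hnm, hee, hxe, h'⟩
          · exact absurd h'.symm hi2'
          · exact Or.inl ⟨hn1, Or.inl h'⟩
          · exact Or.inl ⟨hn1, Or.inr h'⟩
          · exact absurd h0 (by omega)
          · have hmn : m = n := by omega
            subst hmn
            have hee' : e i = e' := eq_of_heq hee
            rw [← hee', hpair, Sym2.mem_iff] at hxe
            rcases hxe with rfl | rfl
            · exact Or.inr (Or.inl ⟨hm, h'⟩)
            · exact Or.inr (Or.inr ⟨hm, h'⟩)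
        rcases union3_mem hsp with hq | hq | hq
        · exact Or.inl ⟨xs, hxs, hq⟩
        · exact Or.inr (Or.inl ⟨xs, hxs, hq⟩)
        · exact Or.inr (Or.inr ⟨xs, hxs, hq⟩)
      by_cases hQ1 : ∃ s ∈ S, ∃ xs, umk U xs = s ∧ {i | ∃ hn1 : n + 1 ≤ i,
          xs i = Elt.prime (n+1) hn1 (e i) ∨ xs i = Elt.dprime (n+1) hn1 (e i)} ∈ U
      · obtain ⟨s1, hs1, xs, hxs, hq⟩ := hQ1
        rcases Fg_elim (hS hs1) hxs with hp1 | ⟨m, hnod1 | hpd1⟩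
        · exfalso
          obtain ⟨i, hi1, hi2⟩ := uset_nonempty (U.inter_mem hp1 hq)
          have hi1' : xs i = Elt.p := hi1
          obtain ⟨hna, h'⟩ := hi2
          rcases h' with h' | h' <;> rw [hi1'] at h' <;> cases h'
        · exfalso
          obtain ⟨i, hi1, hi2⟩ := uset_nonempty (U.inter_mem hnod1 hq)
          obtain ⟨hm, u, -, hxi⟩ := hi1
          obtain ⟨hna, h'⟩ := hi2
          rcases h' with h' | h' <;> rw [hxi] at h' <;> cases h'
        · have hm1 : m = n + 1 := by
            obtain ⟨i, hi1, hi2⟩ := uset_nonempty (U.inter_mem hpd1 hq)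
            obtain ⟨hm, u, -, hxi⟩ := hi1
            obtain ⟨hna, h'⟩ := hi2
            rcases hxi with hxi | hxi <;> rcases h' with h' | h' <;> rw [hxi] at h' 
            · injection h'
            · cases h'
            · cases h'
            · injection h'
          subst hm1
          refine NN_mem_Fg (n := n + 1) ?_
          filter_upwards [hpd1, hq, he] with i h1 h2 h3
          obtain ⟨hm, u, hu, hxi⟩ := h1
          obtain ⟨hna, h'⟩ := h2
          obtain ⟨hn1, -, hz⟩ := h3
          have huev : u = e i := by
            rcases hxi with hxi | hxi <;> rcases h' with h' | h' <;> rw [hxi] at h' 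
            · injection h'
            · cases h'
            · cases h'
            · injection h'
          exact ⟨hn1, e i, huev ▸ hu, hz⟩
      by_cases hQ3 : ∃ s ∈ S, ∃ xs, umk U xs = s ∧ {i | ∃ hn : n ≤ i,
          xs i = Elt.prime n hn (y i) ∨ xs i = Elt.dprime n hn (y i)} ∈ U
      · obtain ⟨s1, hs1, xs, hxs, hq⟩ := hQ3
        rcases Fg_elim (hS hs1) hxs with hp1 | ⟨m, hnod1 | hpd1⟩
        · exfalso
          obtain ⟨i, hi1, hi2⟩ := uset_nonempty (U.inter_mem hp1 hq)
          have hi1' : xs i = Elt.p := hi1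
          obtain ⟨hna, h'⟩ := hi2
          rcases h' with h' | h' <;> rw [hi1'] at h' <;> cases h'
        · exfalso
          obtain ⟨i, hi1, hi2⟩ := uset_nonempty (U.inter_mem hnod1 hq)
          obtain ⟨hm, u, -, hxi⟩ := hi1
          obtain ⟨hna, h'⟩ := hi2
          rcases h' with h' | h' <;> rw [hxi] at h' <;> cases h'
        · have hm1 : m = n := by
            obtain ⟨i, hi1, hi2⟩ := uset_nonempty (U.inter_mem hpd1 hq)
            obtain ⟨hm, u, -, hxi⟩ := hi1
            obtain ⟨hna, h'⟩ := hi2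
            rcases hxi with hxi | hxi <;> rcases h' with h' | h' <;> rw [hxi] at h' 
            · injection h'
            · cases h'
            · cases h'
            · injection h'
          rw [hm1] at hpd1
          refine NN_mem_Fg (n := n + 1) ?_
          filter_upwards [hpd1, hq, hy, hv] with i h1 h2 h3 h4
          obtain ⟨hm, u, hu, hxi⟩ := h1
          obtain ⟨hna, h'⟩ := h2
          obtain ⟨⟨hpair, -⟩, hn1, hz⟩ := h3
          obtain ⟨hna4, hcv, -⟩ := h4
          have huy : u = y i := by
            rcases hxi with hxi | hxi <;> rcases h' with h' | h' <;> rw [hxi] at h' 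
            · injection h'
            · cases h'
            · cases h'
            · injection h'
          refine ⟨hn1, e i, fun hc => ?_, hz⟩
          rcases (cont_pair hpair _).1 hc with hc' | hc'
          · exact hcv hc'
          · exact hu (huy ▸ hc')
      · -- all elements of `S` are primes over `v`: contradiction with GLB
        exfalso
        have hforall : ∀ s ∈ S, ∃ xs, umk U xs = s ∧ {i | ∃ hn : n ≤ i,
            xs i = Elt.prime n hn (v i) ∨ xs i = Elt.dprime n hn (v i)} ∈ U := by
          intro s hs
          rcases hclass s hs with h' | h' | h'
          · exact absurd ⟨s, hs, h'⟩ hQ1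
          · exact h'
          · exact absurd ⟨s, hs, h'⟩ hQ3
        have hlb : umk U (fun i => if hni : n ≤ i then Elt.node n hni (v i) else Elt.p)
            ∈ lowerBounds S := by
          intro s hs
          obtain ⟨xs, hxs, hq⟩ := hforall s hs
          rw [← hxs]
          apply umk_le_umk.2
          filter_upwards [hq] with i hi
          obtain ⟨hn', hxsi⟩ := hi
          show (if hni : n ≤ i then Elt.node n hni (v i) else Elt.p) ≤ xs i
          rw [dif_pos hn']
          rcases hxsi with h' | h' <;> rw [h']
          · exact Le.node_prime _ _ _
          · exact Le.node_dprime _ _ _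
        have hcontra := umk_le_umk.1 (h.2 hlb)
        obtain ⟨i, hi1, hi2⟩ := uset_nonempty (U.inter_mem hcontra hy)
        obtain ⟨-, hn1, hz⟩ := hi2
        have hni : n ≤ i := by omega
        have hi1' : (if hni : n ≤ i then Elt.node n hni (v i) else Elt.p) ≤ z i := hi1
        rw [dif_pos hni, hz] at hi1'
        have := Le.eq_of_le_node hi1'
        injection this with h'' _
        omega
    · refine absurd ?_ (singleton_not_mem hU n)
      refine Filter.mem_of_superset hC fun i hi => ?_
      have : i = n := hi
      simp [this]

end Meet
section Main

variable {U : Ultrafilter ℕ}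

lemma fin4_succ_ne : ∀ c : Fin 4, c + 1 ≠ c := by decide

/-- Atom selection on elements. -/
noncomputable def atomAvoidE (c : Fin 4) : ∀ {k : ℕ}, Elt k → Fin 4
  | _, .node n _ w => atomAvoid c n w
  | _, .prime n _ w => atomAvoid c n w
  | _, .dprime n _ w => atomAvoid c n w
  | _, _ => c + 1

lemma avoid_eq_self {k : ℕ} {c : Fin 4} {e : Elt k} (h : atomAvoidE c e = c) :
    ∃ hn : 0 ≤ k, e = Elt.node 0 hn c ∨ e = Elt.prime 0 hn c ∨ e = Elt.dprime 0 hn c := by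
  cases e with
  | p => exact absurd h (fin4_succ_ne c)
  | q => exact absurd h (fin4_succ_ne c)
  | node n hn w =>
      cases n with
      | zero =>
          have hw : w = c := h
          exact ⟨Nat.zero_le k, Or.inl (by rw [hw])⟩
      | succ n => exact absurd h (atomAvoid_ne c n w)
  | prime n hn w =>
      cases n with
      | zero =>
          have hw : w = c := h
          exact ⟨Nat.zero_le k, Or.inr (Or.inl (by rw [hw]))⟩
      | succ n => exact absurd h (atomAvoid_ne c n w)
  | dprime n hn w =>
      cases n with
      | zero =>
          have hw : w = c := h
          exact ⟨Nat.zero_le k, Or.inr (Or.inr (by rw [hw]))⟩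
      | succ n => exact absurd h (atomAvoid_ne c n w)

/-- The three closure conditions defining the auxiliary set of "prime filters". -/
def InX (U : Ultrafilter ℕ) (F : Set (UProd U Elt)) : Prop :=
  (∀ c ∈ F, ∀ d, c ≤ d → d ∈ F) ∧
  (∀ S : Set (UProd U Elt), S ⊆ F → ∀ t0, IsGLB S t0 → t0 ∈ F) ∧
  (∀ T : Set (UProd U Elt), ∀ c, IsLUB T c → c ∈ F → ∃ t ∈ T, t ∈ F)

lemma Fg_prime (g : ℕ → Fin 4) {T : Set (UProd U Elt)} {c : UProd U Elt}
    (hlub : IsLUB T c) (hc : c ∈ Fg U g) : ∃ t ∈ T, t ∈ Fg U g := by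
  by_cases hct : c ∈ T
  · exact ⟨c, hct, hc⟩
  obtain ⟨-, f1, f2, h1, h2, hne⟩ := join_classify hlub hct
  by_cases hf1 : {i | f1 i ≠ g i} ∈ U
  · refine ⟨nd0 U f1, h1, NN_mem_Fg (n := 0) ?_⟩
    filter_upwards [hf1] with i hi
    exact ⟨Nat.zero_le i, f1 i, fun hcc => hi hcc, rfl⟩
  · have hf1' : {i | f1 i = g i} ∈ U := by
      have := (Ultrafilter.compl_mem_iff_notMem (s := {i | f1 i ≠ g i})).2 hf1
      simpa [Set.compl_setOf] using this
    have hf2 : {i | f2 i ≠ g i} ∈ U := by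
      by_contra hf2
      have hf2' : {i | f2 i = g i} ∈ U := by
        have := (Ultrafilter.compl_mem_iff_notMem (s := {i | f2 i ≠ g i})).2 hf2
        simpa [Set.compl_setOf] using this
      apply hne
      apply umk_eq_umk.2
      filter_upwards [hf1', hf2'] with i hi1 hi2
      show Elt.node 0 (Nat.zero_le i) (f1 i) = Elt.node 0 (Nat.zero_le i) (f2 i)
      rw [hi1, hi2]
    refine ⟨nd0 U f2, h2, NN_mem_Fg (n := 0) ?_⟩
    filter_upwards [hf2] with i hi
    exact ⟨Nat.zero_le i, f2 i, fun hcc => hi hcc, rfl⟩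

lemma Fg_InX (hU : ∀ i : ℕ, U ≠ pure i) (g : ℕ → Fin 4) : InX U (Fg U g) :=
  ⟨fun c hc d hcd => Fg_upclosed hc hcd,
   fun S hS t0 hglb => Fg_meet hU g hS hglb,
   fun T c hlub hc => Fg_prime g hlub hc⟩

lemma upset_InX (a : UProd U Elt) (ha : ¬ a ≤ pbar U) : InX U {c | a ≤ c} := by
  refine ⟨fun c hc d hcd => le_trans hc hcd, ?_, ?_⟩
  · intro S hS t0 hglb
    exact hglb.2 fun s hs => hS hs
  · intro T c hlub hc
    by_cases hct : c ∈ T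
    · exact ⟨c, hct, hc⟩
    · obtain ⟨hcp, -⟩ := join_classify hlub hct
      exact absurd (hcp ▸ hc : a ≤ pbar U) ha

/-- The separation property. -/
lemma sep (hU : ∀ i : ℕ, U ≠ pure i) (a b : UProd U Elt) (hab : ¬ a ≤ b) :
    ∃ F : Set (UProd U Elt), InX U F ∧ a ∈ F ∧ b ∉ F := by
  classical
  by_cases hap : a ≤ pbar U
  · obtain ⟨x, rfl⟩ := umk_surj a
    obtain ⟨y, hy⟩ := umk_surj b
    have hx := le_pbar_iff.1 hap
    have hsplit : {i | x i = Elt.p} ∪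
        {i | ∃ w, x i = Elt.node 0 (Nat.zero_le i) w} ∈ U := hx
    rcases Ultrafilter.union_mem_iff.1 hsplit with hXp | hXn
    · -- `a = pbar`
      have hae : umk U x = pbar U := umk_eq_umk.2 hXp
      set g : ℕ → Fin 4 := fun i => atomAvoidE 0 (y i) with hg
      refine ⟨Fg U g, Fg_InX hU g, hae ▸ pbar_mem_Fg g, fun hb => ?_⟩
      rcases Fg_elim hb hy with hbp | ⟨n, hn | hn⟩
      · apply hab
        have hbe : umk U y = pbar U := umk_eq_umk.2 hbp
        rw [hae, ← hy, hbe]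
      · obtain ⟨i, hni, w, hw, hyi⟩ := uset_nonempty hn
        apply hw
        have : g i = atomAvoid 0 n w := by rw [hg]; simp only; rw [hyi]; rfl
        rw [this]
        exact cont_atomAvoid 0 n w
      · obtain ⟨i, hni, w, hw, hyi⟩ := uset_nonempty hn
        apply hw
        have : g i = atomAvoid 0 n w := by
          rw [hg]; simp only
          rcases hyi with h' | h' <;> rw [h'] <;> rfl
        rw [this]
        exact cont_atomAvoid 0 n w
    · -- `a` is a class of level-0 nodes
      obtain ⟨f, hf⟩ := U_extract (α := N 0) hXn
      have hax : umk U x = nd0 U f := umk_eq_umk.2 hf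
      set g : ℕ → Fin 4 := fun i => atomAvoidE (f i) (y i) with hg
      have hbF : umk U y ∉ Fg U g := by
        intro hb
        rcases Fg_elim hb (rfl : umk U y = umk U y) with hbp | ⟨n, hn | hn⟩
        · -- b = pbar, but a ≤ pbar
          apply hab
          rw [← hy]
          apply umk_le_umk.2
          filter_upwards [hf, hbp] with i hi1 hi2
          rw [hi1, hi2]
          exact Le.node_p _ _
        · obtain ⟨i, hni, w, hw, hyi⟩ := uset_nonempty hn
          apply hw
          have : g i = atomAvoid (f i) n w := by rw [hg]; simp only; rw [hyi]; rfl
          rw [this]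
          exact cont_atomAvoid _ n w
        · obtain ⟨i, hni, w, hw, hyi⟩ := uset_nonempty hn
          apply hw
          have : g i = atomAvoid (f i) n w := by
            rw [hg]; simp only
            rcases hyi with h' | h' <;> rw [h'] <;> rfl
          rw [this]
          exact cont_atomAvoid _ n w
      have haF : umk U x ∈ Fg U g := by
        have hgne : {i | g i ≠ f i} ∈ U := by
          by_contra hgg
          have hgeq : {i | g i = f i} ∈ U := by
            have := (Ultrafilter.compl_mem_iff_notMem (s := {i | g i ≠ f i})).2 hgg
            simpa [Set.compl_setOf] using this
          -- then y is a.e. a level-0 object with value f i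
          have hsplit2 : {i | y i = Elt.node 0 (Nat.zero_le i) (f i)} ∪
              ({i | y i = Elt.prime 0 (Nat.zero_le i) (f i)} ∪
               {i | y i = Elt.dprime 0 (Nat.zero_le i) (f i)}) ∈ U := by
            filter_upwards [hgeq] with i hi
            obtain ⟨hn0, h'⟩ := avoid_eq_self (hi : atomAvoidE (f i) (y i) = f i)
            rcases h' with h' | h' | h'
            · exact Or.inl h'
            · exact Or.inr (Or.inl h')
            · exact Or.inr (Or.inr h')
          rcases union3_mem hsplit2 with hh | hh | hh
          · -- b = a
            apply hab
            have hbe : umk U y = nd0 U f := umk_eq_umk.2 hh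
            rw [hax, ← hy, hbe]
          · apply hab
            rw [← hy]
            apply umk_le_umk.2
            filter_upwards [hf, hh] with i hi1 hi2
            rw [hi1, hi2]
            exact Le.node_prime _ _ _
          · apply hab
            rw [← hy]
            apply umk_le_umk.2
            filter_upwards [hf, hh] with i hi1 hi2
            rw [hi1, hi2]
            exact Le.node_dprime _ _ _
        refine NN_mem_Fg (n := 0) ?_
        filter_upwards [hgne, hf] with i hi1 hi2
        exact ⟨Nat.zero_le i, f i, fun hcc => hi1 ((hcc : f i = g i).symm), hi2⟩
      exact ⟨Fg U g, Fg_InX hU g, haF, fun hb => hbF (hy ▸ hb)⟩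
  · exact ⟨{c | a ≤ c}, upset_InX a hap, le_refl a, hab⟩

end Main
/-- For a non-principal ultrafilter `U` on `ω` and all cardinals `m, n`
with `3 ≤ m, n ≤ ω`, the ultraproduct `∏_U P_i` is `(m,n)`-representable. -/
theorem statement15 (U : Ultrafilter ℕ) (hU : ∀ i : ℕ, U ≠ pure i)
    (m n : Cardinal.{0}) (hm3 : 3 ≤ m) (hmω : m ≤ ℵ₀) (hn3 : 3 ≤ n) (hnω : n ≤ ℵ₀) :
    IsRepresentable m n (UProd U Elt) := by
  classical
  refine ⟨{F : Set (UProd U Elt) // InX U F}, Set.univ,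
    fun a => {F | a ∈ F.1}, ?_, fun _ => trivial, ?_, ?_, ?_⟩
  · exact ⟨trivial, trivial, fun _ _ _ _ => trivial, fun _ _ _ _ => trivial,
      fun _ _ => trivial⟩
  · -- injectivity
    intro a b hab
    by_contra hne
    have h2 : ¬ a ≤ b ∨ ¬ b ≤ a := by
      by_contra hcon
      push_neg at hcon
      exact hne (le_antisymm hcon.1 hcon.2)
    simp only at hab
    rcases h2 with h2 | h2
    · obtain ⟨F, hF, haF, hbF⟩ := sep hU a b h2
      have h3 : (⟨F, hF⟩ : {F : Set (UProd U Elt) // InX U F}) ∈ {F :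
          {F : Set (UProd U Elt) // InX U F} | a ∈ F.1} := haF
      rw [hab] at h3
      exact hbF h3
    · obtain ⟨F, hF, hbF, haF⟩ := sep hU b a h2
      have h3 : (⟨F, hF⟩ : {F : Set (UProd U Elt) // InX U F}) ∈ {F :
          {F : Set (UProd U Elt) // InX U F} | b ∈ F.1} := hbF
      rw [← hab] at h3
      exact haF h3
  · -- meets
    intro S _ a hglb
    ext F
    simp only [Set.mem_setOf_eq, Set.mem_iInter]
    constructor
    · intro haF s hs
      exact F.2.1 a haF s (hglb.1 hs)
    · intro hall
      exact F.2.2.1 S (fun s hs => hall s hs) a hglb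
  · -- joins
    intro T _ a hlub
    ext F
    simp only [Set.mem_setOf_eq, Set.mem_iUnion]
    constructor
    · intro haF
      obtain ⟨t, ht, htF⟩ := F.2.2.2 T a hlub haF
      exact ⟨t, ht, htF⟩
    · rintro ⟨t, ht, htF⟩
      exact F.2.1 t htF a (hlub.1 ht)
end

section
/- Let U be a non-principal ultrafilter on ω and consider the ultraproduct ∏_U P_i of the posets P_0, P_1, P_2, .... Then the set Γ = ⋃_{k∈ω} {[z̄] : z ∈ P_k \ {q}} (the set of elements of the ultraproduct represented by eventually-constant images of elements other than q) is an (ω,ω)-filter of ∏_U P_i. -/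
open Cardinal

universe u

/-- An `(α,β)`-filter: an up-closed set, closed under all existing meets of subsets of
itself of cardinality `< α`, and meeting every subset of `P` of cardinality `< β` whose
join exists and lies in the set. -/
def IsMNFilter (α β : Cardinal.{u}) {P : Type u} [PartialOrder P] (Γ : Set P) : Prop :=
  (∀ x ∈ Γ, ∀ y : P, x ≤ y → y ∈ Γ) ∧
  (∀ S : Set P, S ⊆ Γ → #S < α → ∀ a : P, IsGLB S a → a ∈ Γ) ∧
  (∀ T : Set P, #T < β → ∀ a : P, IsLUB T a → a ∈ Γ → (T ∩ Γ).Nonempty)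

/-- The canonical embedding of `P_k` into `P_l` for `k ≤ l`. -/
def emb {k l : ℕ} (h : k ≤ l) : Elt k → Elt l
  | .p => .p
  | .q => .q
  | .node n hn w => .node n (hn.trans h) w
  | .prime n hn w => .prime n (hn.trans h) w
  | .dprime n hn w => .dprime n (hn.trans h) w

/-- For `x ∈ P_k`, the sequence `x̄` whose `i`-th term, for `i ≥ k`, is the image of `x`
in `P_i` under the canonical embeddings (terms below `k` are irrelevant modulo a
non-principal ultrafilter). -/
def bar (k : ℕ) (x : Elt k) : ∀ i : ℕ, Elt i := fun i =>
  if h : k ≤ i then emb h x else Elt.p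

/-- The element `[x̄]` of the ultraproduct `∏_U P_i` determined by `x ∈ P_k`. -/
def cls (U : Ultrafilter ℕ) {k : ℕ} (x : Elt k) : UProd U Elt :=
  Quotient.mk (upSetoid U Elt) (bar k x)

section Aux

instance finiteN : ∀ n, Finite (N n)
  | 0 => inferInstanceAs (Finite (Fin 4))
  | (n+1) => by
      haveI := finiteN n
      exact inferInstanceAs (Finite {s : Sym2 (N n) // ¬s.IsDiag})

def eltEmbed (k : ℕ) : Elt k → (Unit ⊕ Unit ⊕ ((Fin 3) × (Σ n : Fin (k+1), N n)))
  | .p => .inl ()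
  | .q => .inr (.inl ())
  | .node n hn x => .inr (.inr (0, ⟨⟨n, Nat.lt_succ_of_le hn⟩, x⟩))
  | .prime n hn x => .inr (.inr (1, ⟨⟨n, Nat.lt_succ_of_le hn⟩, x⟩))
  | .dprime n hn x => .inr (.inr (2, ⟨⟨n, Nat.lt_succ_of_le hn⟩, x⟩))

instance finiteElt (k : ℕ) : Finite (Elt k) := by
  apply Finite.of_injective (eltEmbed k)
  intro a b h
  cases a <;> cases b <;> simp_all [eltEmbed]

lemma emb_emb {k l m : ℕ} (h1 : k ≤ l) (h2 : l ≤ m) (z : Elt k) :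
    emb h2 (emb h1 z) = emb (h1.trans h2) z := by cases z <;> rfl

lemma emb_ne_q {k l : ℕ} (h : k ≤ l) {z : Elt k} (hz : z ≠ Elt.q) : emb h z ≠ Elt.q := by
  cases z <;> simp_all [emb]

lemma bar_eq {k : ℕ} (z : Elt k) {i : ℕ} (h : k ≤ i) : bar k z i = emb h z := dif_pos h

lemma le_p {i : ℕ} {y : Elt i} (h : Le i Elt.p y) : y = Elt.p := by cases h; rfl

lemma le_prime {i n : ℕ} {hn : n ≤ i} {x : N n} {y : Elt i}
    (h : Le i (Elt.prime n hn x) y) : y = Elt.prime n hn x := by cases h; rfl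

lemma le_dprime {i n : ℕ} {hn : n ≤ i} {x : N n} {y : Elt i}
    (h : Le i (Elt.dprime n hn x) y) : y = Elt.dprime n hn x := by cases h; rfl

/-- Up-sets of embedded non-`q` elements consist of embedded non-`q` elements. -/
lemma upLemma {k i : ℕ} (hki : k ≤ i) (z : Elt k) (hz : z ≠ Elt.q) (y : Elt i)
    (h : Le i (emb hki z) y) : ∃ u : Elt k, u ≠ Elt.q ∧ y = emb hki u := by
  cases z with
  | p => exact ⟨Elt.p, by simp, (le_p h).symm ▸ rfl⟩
  | q => exact absurd rfl hz
  | node n hn x =>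
      simp only [emb] at h
      cases h with
      | refl => exact ⟨Elt.node n hn x, by simp, rfl⟩
      | node_p h0 x => exact ⟨Elt.p, by simp, rfl⟩
      | node_prime => exact ⟨Elt.prime n hn x, by simp, rfl⟩
      | node_dprime => exact ⟨Elt.dprime n hn x, by simp, rfl⟩
      | e_prime m hm e w hw =>
          exact ⟨Elt.prime m (Nat.le_of_succ_le hn) w, by simp, rfl⟩
      | e_dprime m hm e w hw =>
          exact ⟨Elt.dprime m (Nat.le_of_succ_le hn) w, by simp, rfl⟩
  | prime n hn x =>
      simp only [emb] at h
      exact ⟨Elt.prime n hn x, by simp, (le_prime h).symm ▸ rfl⟩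
  | dprime n hn x =>
      simp only [emb] at h
      exact ⟨Elt.dprime n hn x, by simp, (le_dprime h).symm ▸ rfl⟩

/-- Down-sets of embedded non-`q` elements consist of embedded (one level up) non-`q`
elements. -/
lemma downLemma {k i : ℕ} (hki : k + 1 ≤ i) (z : Elt k) (hz : z ≠ Elt.q) (y : Elt i)
    (h : Le i y (emb (Nat.le_of_succ_le hki) z)) :
    ∃ u : Elt (k + 1), u ≠ Elt.q ∧ y = emb hki u := by
  cases z with
  | p =>
      simp only [emb] at h
      cases h with
      | refl => exact ⟨Elt.p, by simp, rfl⟩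
      | node_p h0 x => exact ⟨Elt.node 0 (Nat.zero_le _) x, by simp, rfl⟩
  | q => exact absurd rfl hz
  | node n hn x =>
      rw [h.eq_of_le_node]
      exact ⟨Elt.node n (hn.trans (Nat.le_succ k)) x, by simp, rfl⟩
  | prime n hn x =>
      simp only [emb] at h
      cases h with
      | refl => exact ⟨Elt.prime n (hn.trans (Nat.le_succ k)) x, by simp, rfl⟩
      | node_prime => exact ⟨Elt.node n (hn.trans (Nat.le_succ k)) x, by simp, rfl⟩
      | e_prime m hm e w hw =>
          exact ⟨Elt.node (n + 1) (Nat.succ_le_succ hn) e, by simp, rfl⟩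
      | q_prime => omega
  | dprime n hn x =>
      simp only [emb] at h
      cases h with
      | refl => exact ⟨Elt.dprime n (hn.trans (Nat.le_succ k)) x, by simp, rfl⟩
      | node_dprime => exact ⟨Elt.node n (hn.trans (Nat.le_succ k)) x, by simp, rfl⟩
      | e_dprime m hm e w hw =>
          exact ⟨Elt.node (n + 1) (Nat.succ_le_succ hn) e, by simp, rfl⟩
      | q_dprime => omega

end Aux

lemma cofinite_mem (U : Ultrafilter ℕ) (hU : ∀ i : ℕ, U ≠ pure i) (k : ℕ) :
    {i : ℕ | k ≤ i} ∈ U := by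
  by_contra h
  have hc : {i : ℕ | k ≤ i}ᶜ ∈ U := Ultrafilter.compl_mem_iff_notMem.2 h
  have hfin : ({i : ℕ | k ≤ i}ᶜ).Finite := by
    apply Set.Finite.subset (Set.finite_Iio k)
    intro i hi
    exact not_le.mp (show ¬ k ≤ i from hi)
  obtain ⟨i, -, hi⟩ := Ultrafilter.eq_pure_of_finite_mem hfin hc
  exact hU i hi

/-- If `f` agrees `U`-often with a `bar` of some non-`q` element of `Elt k`, then its
class lies in `Γ`. -/
lemma uLemma (U : Ultrafilter ℕ) {k : ℕ} (f : ∀ i, Elt i)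
    (h : {i | ∃ u : Elt k, u ≠ Elt.q ∧ f i = bar k u i} ∈ U) :
    ∃ u : Elt k, u ≠ Elt.q ∧ Quotient.mk (upSetoid U Elt) f = cls U u := by
  have hsub : {i | ∃ u : Elt k, u ≠ Elt.q ∧ f i = bar k u i} ⊆
      ⋃ u ∈ {u : Elt k | u ≠ Elt.q}, {i | f i = bar k u i} := by
    rintro i ⟨u, hu, he⟩
    exact Set.mem_biUnion hu he
  have hU2 : (⋃ u ∈ {u : Elt k | u ≠ Elt.q}, {i | f i = bar k u i}) ∈ U :=
    Filter.mem_of_superset h hsub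
  rw [Ultrafilter.finite_biUnion_mem_iff (Set.toFinite _)] at hU2
  obtain ⟨u, hu, hmem⟩ := hU2
  exact ⟨u, hu, Quotient.sound hmem⟩

/-- For a non-principal ultrafilter `U` on `ω`, the set
`Γ = ⋃_k {[z̄] : z ∈ P_k \ {q}}` is an `(ω,ω)`-filter of the ultraproduct `∏_U P_i`. -/
theorem statement19 (U : Ultrafilter ℕ) (hU : ∀ i : ℕ, U ≠ pure i) :
    IsMNFilter ℵ₀ ℵ₀
      {v : UProd U Elt | ∃ (k : ℕ) (z : Elt k), z ≠ Elt.q ∧ v = cls U z} := by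
  set Γ : Set (UProd U Elt) :=
    {v : UProd U Elt | ∃ (k : ℕ) (z : Elt k), z ≠ Elt.q ∧ v = cls U z} with hΓ
  have hcof := cofinite_mem U hU
  -- Γ is down-closed
  have hdown : ∀ v ∈ Γ, ∀ w : UProd U Elt, w ≤ v → w ∈ Γ := by
    rintro v ⟨k, z, hz, rfl⟩ w hw
    obtain ⟨g, rfl⟩ := Quotient.exists_rep w
    have hle : {i | g i ≤ bar k z i} ∈ U := hw
    have hkey : {i | ∃ u : Elt (k + 1), u ≠ Elt.q ∧ g i = bar (k + 1) u i} ∈ U := by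
      filter_upwards [hle, hcof (k + 1)] with i h1 h2
      rw [bar_eq z (Nat.le_of_succ_le h2)] at h1
      obtain ⟨u, hu, he⟩ := downLemma h2 z hz _ h1
      exact ⟨u, hu, by rw [bar_eq u h2]; exact he⟩
    obtain ⟨u, hu, he⟩ := uLemma U g hkey
    exact ⟨k + 1, u, hu, he⟩
  refine ⟨?_, ?_, ?_⟩
  · -- up-closed
    rintro v ⟨k, z, hz, rfl⟩ y hy
    obtain ⟨g, rfl⟩ := Quotient.exists_rep y
    have hle : {i | bar k z i ≤ g i} ∈ U := hy
    have hkey : {i | ∃ u : Elt k, u ≠ Elt.q ∧ g i = bar k u i} ∈ U := by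
      filter_upwards [hle, hcof k] with i h1 h2
      rw [bar_eq z h2] at h1
      obtain ⟨u, hu, he⟩ := upLemma h2 z hz _ h1
      exact ⟨u, hu, by rw [bar_eq u h2]; exact he⟩
    obtain ⟨u, hu, he⟩ := uLemma U g hkey
    exact ⟨k, u, hu, he⟩
  · -- meets
    rintro S hS - a ha
    rcases S.eq_empty_or_nonempty with rfl | ⟨t, ht⟩
    · -- there is no top element
      exfalso
      have h1 : cls U (Elt.p : Elt 0) ≤ a := ha.2 (by simp [lowerBounds])
      have h2 : cls U (Elt.prime 0 le_rfl ((0 : Fin 4) : N 0)) ≤ a :=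
        ha.2 (by simp [lowerBounds])
      obtain ⟨g, rfl⟩ := Quotient.exists_rep a
      have e1 : {i | bar 0 (Elt.p : Elt 0) i ≤ g i} ∈ U := h1
      have e2 : {i | bar 0 (Elt.prime 0 le_rfl ((0 : Fin 4) : N 0)) i ≤ g i} ∈ U := h2
      obtain ⟨i, hp, hpr⟩ := Filter.nonempty_of_mem (Filter.inter_mem e1 e2)
      rw [Set.mem_setOf_eq, bar_eq _ (Nat.zero_le i)] at hp
      rw [Set.mem_setOf_eq, bar_eq _ (Nat.zero_le i)] at hpr
      exact absurd ((le_p hp).symm.trans (le_prime hpr)) (by simp)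
    · obtain ⟨k, z, hz, rfl⟩ := hS ht
      exact hdown _ ⟨k, z, hz, rfl⟩ a (ha.1 ht)
  · -- joins
    rintro T - a ha haΓ
    rcases T.eq_empty_or_nonempty with rfl | ⟨t, ht⟩
    · -- there is no bottom element
      exfalso
      have h1 : a ≤ cls U (Elt.node 0 le_rfl ((0 : Fin 4) : N 0)) :=
        ha.2 (by simp [upperBounds])
      have h2 : a ≤ cls U (Elt.node 0 le_rfl ((1 : Fin 4) : N 0)) :=
        ha.2 (by simp [upperBounds])
      obtain ⟨g, rfl⟩ := Quotient.exists_rep a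
      have e1 : {i | g i ≤ bar 0 (Elt.node 0 le_rfl ((0 : Fin 4) : N 0)) i} ∈ U := h1
      have e2 : {i | g i ≤ bar 0 (Elt.node 0 le_rfl ((1 : Fin 4) : N 0)) i} ∈ U := h2
      obtain ⟨i, hp, hpr⟩ := Filter.nonempty_of_mem (Filter.inter_mem e1 e2)
      rw [Set.mem_setOf_eq, bar_eq _ (Nat.zero_le i)] at hp
      rw [Set.mem_setOf_eq, bar_eq _ (Nat.zero_le i)] at hpr
      have hcon := hp.eq_of_le_node.symm.trans hpr.eq_of_le_node
      replace hcon := eq_of_heq (Elt.node.inj hcon).2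
      exact absurd (show (0 : Fin 4) = 1 from hcon) (by decide)
    · exact ⟨t, ht, hdown a haΓ t (ha.1 ht)⟩
end
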